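/- The image of the determinant homomorphism det : Γ → ℂˣ is exactly the group of sixth roots of unity, and every group homomorphism φ : Γ → ℂˣ equals g ↦ det(g)^k for some integer k. (Equivalently: the group of characters of Γ is cyclic of order 6, generated by the restriction of det.) -/

import Mathlib

open MvPolynomial

/-- Substitution of a 2×2 matrix into a polynomial in two variables:
`tᵢ ↦ gᵢ₁ t₁ + gᵢ₂ t₂`. -/
noncomputable def bsub (g : Matrix (Fin 2) (Fin 2) ℂ) (p : MvPolynomial (Fin 2) ℂ) :
    MvPolynomial (Fin 2) ℂ :=
  aeval (fun i => C (g i 0) * X 0 + C (g i 1) * X 1) p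

lemma bsub_one (p : MvPolynomial (Fin 2) ℂ) : bsub 1 p = p := by
  have : (fun i => C ((1 : Matrix (Fin 2) (Fin 2) ℂ) i 0) * X 0
      + C ((1 : Matrix (Fin 2) (Fin 2) ℂ) i 1) * X 1) = (X : Fin 2 → MvPolynomial (Fin 2) ℂ) := by
    funext i
    fin_cases i <;> simp [Matrix.one_apply]
  rw [bsub, this, aeval_X_left_apply]

lemma bsub_mul (g h : Matrix (Fin 2) (Fin 2) ℂ) (p : MvPolynomial (Fin 2) ℂ) :
    bsub (g * h) p = bsub h (bsub g p) := by
  unfold bsub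
  rw [← AlgHom.comp_apply]
  refine DFunLike.congr_fun ?_ p
  apply algHom_ext
  intro i
  simp [Matrix.mul_apply, Fin.sum_univ_two]
  ring

/-- The binary cubic `t₁³ + t₂³`. -/
noncomputable def cubicDiag : MvPolynomial (Fin 2) ℂ := X 0 ^ 3 + X 1 ^ 3

/-- The stabilizer `Γ` of the binary cubic `t₁³ + t₂³` in `GL₂(ℂ)`. -/
noncomputable def Gamma : Subgroup (GL (Fin 2) ℂ) where
  carrier := {g | bsub (↑g) cubicDiag = cubicDiag}
  one_mem' := bsub_one _
  mul_mem' := by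
    intro g h hg hh
    show bsub (↑(g * h)) cubicDiag = cubicDiag
    rw [Units.val_mul, bsub_mul, hg, hh]
  inv_mem' := by
    intro g hg
    show bsub (↑g⁻¹) cubicDiag = cubicDiag
    have hg' : bsub (↑g) cubicDiag = cubicDiag := hg
    have h1 : bsub ((↑g : Matrix (Fin 2) (Fin 2) ℂ) * (↑g⁻¹ : Matrix (Fin 2) (Fin 2) ℂ)) cubicDiag
        = bsub (↑g⁻¹ : Matrix (Fin 2) (Fin 2) ℂ) cubicDiag := by
      rw [bsub_mul, hg']
    have h2 : (↑g : Matrix (Fin 2) (Fin 2) ℂ) * (↑g⁻¹ : Matrix (Fin 2) (Fin 2) ℂ) = 1 := by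
      rw [← Units.val_mul, mul_inv_cancel, Units.val_one]
    rw [← h1, h2, bsub_one]

/- ### Auxiliary lemmas -/

lemma eval_bsub_cubic (g : Matrix (Fin 2) (Fin 2) ℂ) (x : Fin 2 → ℂ) :
    eval x (bsub g cubicDiag)
    = (g 0 0 * x 0 + g 0 1 * x 1)^3 + (g 1 0 * x 0 + g 1 1 * x 1)^3 := by
  simp [bsub, cubicDiag]

lemma bsub_cubic_iff (g : Matrix (Fin 2) (Fin 2) ℂ) :
    bsub g cubicDiag = cubicDiag ↔
    ∀ x : Fin 2 → ℂ, (g 0 0 * x 0 + g 0 1 * x 1)^3 + (g 1 0 * x 0 + g 1 1 * x 1)^3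
       = x 0 ^ 3 + x 1 ^ 3 := by
  have hc : ∀ x : Fin 2 → ℂ, eval x cubicDiag = x 0 ^ 3 + x 1 ^ 3 := by
    intro x; simp [cubicDiag]
  constructor
  · intro h x
    rw [← eval_bsub_cubic, h, hc]
  · intro h
    apply MvPolynomial.funext
    intro x
    rw [eval_bsub_cubic, hc]
    exact h x

noncomputable def glmk (M : Matrix (Fin 2) (Fin 2) ℂ) (h : M.det ≠ 0) : GL (Fin 2) ℂ :=
  ((Matrix.isUnit_iff_isUnit_det M).2 h.isUnit).unit

lemma glmk_coe (M : Matrix (Fin 2) (Fin 2) ℂ) (h : M.det ≠ 0) :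
    (↑(glmk M h) : Matrix (Fin 2) (Fin 2) ℂ) = M :=
  IsUnit.unit_spec _

lemma cube_ne_zero {a : ℂ} (ha : a^3 = 1) : a ≠ 0 := by
  intro h; rw [h] at ha; simp at ha

lemma detD {a d : ℂ} (ha : a^3 = 1) (hd : d^3 = 1) :
    (!![a,0;0,d] : Matrix (Fin 2) (Fin 2) ℂ).det ≠ 0 := by
  rw [Matrix.det_fin_two_of]
  simpa using mul_ne_zero (cube_ne_zero ha) (cube_ne_zero hd)

lemma detW {b c : ℂ} (hb : b^3 = 1) (hc : c^3 = 1) :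
    (!![0,b;c,0] : Matrix (Fin 2) (Fin 2) ℂ).det ≠ 0 := by
  rw [Matrix.det_fin_two_of]
  simpa using mul_ne_zero (cube_ne_zero hb) (cube_ne_zero hc)

/-- Diagonal elements of the stabilizer. -/
noncomputable def gD (a d : ℂ) (ha : a^3 = 1) (hd : d^3 = 1) : Gamma :=
  ⟨glmk !![a,0;0,d] (detD ha hd), by
    show bsub _ cubicDiag = cubicDiag
    rw [glmk_coe, bsub_cubic_iff]
    intro x
    simp only [Matrix.cons_val', Matrix.cons_val_zero, Matrix.cons_val_one, Matrix.head_cons,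
      Matrix.empty_val', Matrix.cons_val_fin_one, Matrix.head_fin_const, Matrix.of_apply,
      Matrix.cons_val_zero, Matrix.cons_val_one]
    linear_combination (x 0)^3 * ha + (x 1)^3 * hd⟩

/-- Antidiagonal elements of the stabilizer. -/
noncomputable def gW (b c : ℂ) (hb : b^3 = 1) (hc : c^3 = 1) : Gamma :=
  ⟨glmk !![0,b;c,0] (detW hb hc), by
    show bsub _ cubicDiag = cubicDiag
    rw [glmk_coe, bsub_cubic_iff]
    intro x
    simp only [Matrix.cons_val', Matrix.cons_val_zero, Matrix.cons_val_one, Matrix.head_cons,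
      Matrix.empty_val', Matrix.cons_val_fin_one, Matrix.head_fin_const, Matrix.of_apply,
      Matrix.cons_val_zero, Matrix.cons_val_one]
    linear_combination (x 1)^3 * hb + (x 0)^3 * hc⟩

lemma one_cube : (1:ℂ)^3 = 1 := one_pow 3

lemma gD_coe (a d : ℂ) (ha : a^3 = 1) (hd : d^3 = 1) :
    ((gD a d ha hd : GL (Fin 2) ℂ) : Matrix (Fin 2) (Fin 2) ℂ) = !![a,0;0,d] := glmk_coe _ (detD ha hd)

lemma gW_coe (b c : ℂ) (hb : b^3 = 1) (hc : c^3 = 1) :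
    ((gW b c hb hc : GL (Fin 2) ℂ) : Matrix (Fin 2) (Fin 2) ℂ) = !![0,b;c,0] := glmk_coe _ (detW hb hc)

lemma gamma_eq_of_coe {g h : Gamma}
    (H : ((g : GL (Fin 2) ℂ) : Matrix (Fin 2) (Fin 2) ℂ)
       = ((h : GL (Fin 2) ℂ) : Matrix (Fin 2) (Fin 2) ℂ)) : g = h :=
  Subtype.ext (Units.ext H)

lemma gD_mul (a d a' d' : ℂ) (ha : a^3=1) (hd : d^3=1) (ha' : a'^3=1) (hd' : d'^3=1) :
    gD a d ha hd * gD a' d' ha' hd'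
      = gD (a*a') (d*d') (by rw [mul_pow, ha, ha', one_mul])
          (by rw [mul_pow, hd, hd', one_mul]) := by
  apply gamma_eq_of_coe
  push_cast [gD_coe]
  rw [Matrix.mul_fin_two]
  norm_num

lemma gD_mul_gW (a d b c : ℂ) (ha : a^3=1) (hd : d^3=1) (hb : b^3=1) (hc : c^3=1) :
    gD a d ha hd * gW b c hb hc
      = gW (a*b) (d*c) (by rw [mul_pow, ha, hb, one_mul])
          (by rw [mul_pow, hd, hc, one_mul]) := by
  apply gamma_eq_of_coe
  push_cast [gD_coe, gW_coe]
  rw [Matrix.mul_fin_two]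
  norm_num

lemma gW_mul_gD (b c a d : ℂ) (hb : b^3=1) (hc : c^3=1) (ha : a^3=1) (hd : d^3=1) :
    gW b c hb hc * gD a d ha hd
      = gW (b*d) (c*a) (by rw [mul_pow, hb, hd, one_mul])
          (by rw [mul_pow, hc, ha, one_mul]) := by
  apply gamma_eq_of_coe
  push_cast [gD_coe, gW_coe]
  rw [Matrix.mul_fin_two]
  norm_num

lemma gW_mul_gW (b c b' c' : ℂ) (hb : b^3=1) (hc : c^3=1) (hb' : b'^3=1) (hc' : c'^3=1) :
    gW b c hb hc * gW b' c' hb' hc'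
      = gD (b*c') (c*b') (by rw [mul_pow, hb, hc', one_mul])
          (by rw [mul_pow, hc, hb', one_mul]) := by
  apply gamma_eq_of_coe
  push_cast [gD_coe, gW_coe]
  rw [Matrix.mul_fin_two]
  norm_num

lemma gD_one : gD 1 1 one_cube one_cube = 1 := by
  apply gamma_eq_of_coe
  push_cast [gD_coe]
  rw [Matrix.eta_fin_two (1 : Matrix (Fin 2) (Fin 2) ℂ)]
  norm_num

lemma gD_congr {a d a' d' : ℂ} (ha : a^3=1) (hd : d^3=1) (ha' : a'^3=1) (hd' : d'^3=1)
    (h1 : a = a') (h2 : d = d') : gD a d ha hd = gD a' d' ha' hd' := by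
  subst h1; subst h2; rfl

/-- The primitive cube root of unity. -/
noncomputable def om : ℂ := ⟨-1/2, Real.sqrt 3 / 2⟩

lemma om_sq : om^2 + om + 1 = 0 := by
  have h3 : Real.sqrt 3 * Real.sqrt 3 = 3 := Real.mul_self_sqrt (by norm_num)
  apply Complex.ext <;>
    simp [om, pow_two, Complex.add_re, Complex.mul_re, Complex.add_im, Complex.mul_im] <;>
    nlinarith [h3]

lemma om_cube : om^3 = 1 := by linear_combination (om - 1) * om_sq

lemma cube_root_cases (a : ℂ) (h : a^3 = 1) : a = 1 ∨ a = om ∨ a = om^2 := by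
  have h0 : (a - 1) * ((a - om) * (a - om^2)) = 0 := by
    linear_combination h + (om*a - a^2 - om + 1) * om_sq
  rcases mul_eq_zero.1 h0 with h | h
  · exact Or.inl (by linear_combination h)
  rcases mul_eq_zero.1 h with h | h
  · exact Or.inr (Or.inl (by linear_combination h))
  · exact Or.inr (Or.inr (by linear_combination h))

lemma sq_one_cases (x : ℂ) (h : x^2 = 1) : x = 1 ∨ x = -1 := by
  have h0 : (x - 1) * (x + 1) = 0 := by linear_combination h
  rcases mul_eq_zero.1 h0 with h | h
  · exact Or.inl (by linear_combination h)
  · exact Or.inr (by linear_combination h)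

lemma keyCases (a b c d : ℂ) (hdet : a*d - b*c ≠ 0)
    (E1 : a^3 + c^3 = 1) (E2 : b^3 + d^3 = 1)
    (E3 : (a + b)^3 + (c + d)^3 = 2) (E4 : (a - b)^3 + (c - d)^3 = 0) :
    (b = 0 ∧ c = 0 ∧ a^3 = 1 ∧ d^3 = 1) ∨ (a = 0 ∧ d = 0 ∧ b^3 = 1 ∧ c^3 = 1) := by
  have hB : a^2*b + c^2*d = 0 := by linear_combination (1/6)*E3 - (1/6)*E4 - (1/3)*E2
  have hC : a*b^2 + c*d^2 = 0 := by linear_combination (1/6)*E3 + (1/6)*E4 - (1/3)*E1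
  by_cases hb : b = 0
  · have hd3 : d^3 = 1 := by rw [hb] at E2; linear_combination E2
    have hcz : c = 0 := by
      have h0 : c * d^2 = 0 := by rw [hb] at hC; linear_combination hC
      rcases mul_eq_zero.1 h0 with h | h
      · exact h
      · exact absurd h (pow_ne_zero 2 (cube_ne_zero hd3))
    have ha3 : a^3 = 1 := by rw [hcz] at E1; linear_combination E1
    exact Or.inl ⟨hb, hcz, ha3, hd3⟩
  · by_cases ha : a = 0
    · have hc3 : c^3 = 1 := by rw [ha] at E1; linear_combination E1
      have hdz : d = 0 := by
        have h0 : c^2 * d = 0 := by rw [ha] at hB; linear_combination hB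
        rcases mul_eq_zero.1 h0 with h | h
        · exact absurd h (pow_ne_zero 2 (cube_ne_zero hc3))
        · exact h
      have hb3 : b^3 = 1 := by rw [hdz] at E2; linear_combination E2
      exact Or.inr ⟨ha, hdz, hb3, hc3⟩
    · exfalso
      have h0 : a * b * (a*d - b*c) = 0 := by linear_combination d*hB - c*hC
      rcases mul_eq_zero.1 h0 with h | h
      · rcases mul_eq_zero.1 h with h | h
        exacts [ha h, hb h]
      · exact hdet h

/-- Structure theorem for elements of the stabilizer. -/
lemma gamma_cases (g : GL (Fin 2) ℂ) (hg : g ∈ Gamma) :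
    ((↑g : Matrix (Fin 2) (Fin 2) ℂ) 0 1 = 0 ∧ (↑g : Matrix (Fin 2) (Fin 2) ℂ) 1 0 = 0 ∧
      (↑g : Matrix (Fin 2) (Fin 2) ℂ) 0 0 ^ 3 = 1 ∧ (↑g : Matrix (Fin 2) (Fin 2) ℂ) 1 1 ^ 3 = 1) ∨
    ((↑g : Matrix (Fin 2) (Fin 2) ℂ) 0 0 = 0 ∧ (↑g : Matrix (Fin 2) (Fin 2) ℂ) 1 1 = 0 ∧
      (↑g : Matrix (Fin 2) (Fin 2) ℂ) 0 1 ^ 3 = 1 ∧ (↑g : Matrix (Fin 2) (Fin 2) ℂ) 1 0 ^ 3 = 1) := by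
  have hdet : (↑g : Matrix (Fin 2) (Fin 2) ℂ) 0 0 * (↑g : Matrix (Fin 2) (Fin 2) ℂ) 1 1
      - (↑g : Matrix (Fin 2) (Fin 2) ℂ) 0 1 * (↑g : Matrix (Fin 2) (Fin 2) ℂ) 1 0 ≠ 0 := by
    have hu : IsUnit (↑g : Matrix (Fin 2) (Fin 2) ℂ) := g.isUnit
    rw [Matrix.isUnit_iff_isUnit_det, isUnit_iff_ne_zero] at hu
    rwa [Matrix.det_fin_two] at hu
  have h := (bsub_cubic_iff _).1 hg
  have E1 := h ![1,0]
  have E2 := h ![0,1]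
  have E3 := h ![1,1]
  have E4 := h ![1,-1]
  simp only [Matrix.cons_val_zero, Matrix.cons_val_one, Matrix.head_cons] at E1 E2 E3 E4
  exact keyCases _ _ _ _ hdet (by linear_combination E1) (by linear_combination E2)
    (by linear_combination E3) (by linear_combination E4)
lemma pow_exp_cube {m n : ℕ} (x : ℂ) (hx : x^3 = 1) : x^(4*m+3*n) = x^m := by
  calc x^(4*m+3*n) = (x^3)^(m+n) * x^m := by ring
  _ = x^m := by rw [hx, one_pow, one_mul]

lemma neg_one_exp {m n : ℕ} : ((-1:ℂ))^(4*m+3*n) = (-1)^n := by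
  rw [pow_add, pow_mul, pow_mul]
  norm_num

/-- **Characters of `Γ`.** The image of `det : Γ → ℂˣ` is the group of sixth roots
of unity, and every character of `Γ` is an integer power of `det`. -/
theorem gamma_characters :
    Subgroup.map (Matrix.GeneralLinearGroup.det) Gamma = rootsOfUnity 6 ℂ ∧
    ∀ φ : Gamma →* ℂˣ, ∃ k : ℤ,
      ∀ g : Gamma, φ g = (Matrix.GeneralLinearGroup.det (↑g : GL (Fin 2) ℂ)) ^ k := by
  constructor
  · ext ζ
    rw [Subgroup.mem_map, mem_rootsOfUnity]
    constructor
    · rintro ⟨g, hg, rfl⟩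
      apply Units.ext
      rw [Units.val_pow_eq_pow_val, Matrix.GeneralLinearGroup.val_det_apply, Matrix.det_fin_two, Units.val_one]
      rcases gamma_cases g hg with ⟨h1,h2,h3,h4⟩|⟨h1,h2,h3,h4⟩
      · rw [h1, h2]
        linear_combination ((↑g : Matrix (Fin 2) (Fin 2) ℂ) 0 0 ^3 + 1)
            * ((↑g : Matrix (Fin 2) (Fin 2) ℂ) 1 1)^6 * h3
          + ((↑g : Matrix (Fin 2) (Fin 2) ℂ) 1 1 ^ 3 + 1) * h4
      · rw [h1, h2]
        linear_combination ((↑g : Matrix (Fin 2) (Fin 2) ℂ) 0 1 ^3 + 1)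
            * ((↑g : Matrix (Fin 2) (Fin 2) ℂ) 1 0)^6 * h3
          + ((↑g : Matrix (Fin 2) (Fin 2) ℂ) 1 0 ^ 3 + 1) * h4
    · intro hζ
      have hz : (ζ:ℂ)^6 = 1 := by
        have := congrArg Units.val hζ
        rwa [Units.val_pow_eq_pow_val] at this
      have h2 : ((ζ:ℂ)^3)^2 = 1 := by rw [← pow_mul]; exact hz
      rcases sq_one_cases _ h2 with h | h
      · refine ⟨(gD (ζ:ℂ) 1 h one_cube : Gamma), (gD (ζ:ℂ) 1 h one_cube).2, ?_⟩
        apply Units.ext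
        rw [Matrix.GeneralLinearGroup.val_det_apply, gD_coe, Matrix.det_fin_two_of]
        ring
      · have hc : (-(ζ:ℂ))^3 = 1 := by rw [neg_pow, h]; norm_num
        refine ⟨(gW 1 (-(ζ:ℂ)) one_cube hc : Gamma), (gW 1 (-(ζ:ℂ)) one_cube hc).2, ?_⟩
        apply Units.ext
        rw [Matrix.GeneralLinearGroup.val_det_apply, gW_coe, Matrix.det_fin_two_of]
        ring
  · intro φ
    set s : Gamma := gD om 1 om_cube one_cube with hs_def
    set w : Gamma := gW 1 1 one_cube one_cube with hw_def
    -- φ s is a cube root of unity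
    have hs3 : (↑(φ s) : ℂ)^3 = 1 := by
      have hcube : s * s * s = 1 := by
        rw [hs_def, gD_mul, gD_mul]
        rw [show gD (om*om*om) (1*1*1) (by linear_combination (om^6 + om^3 + 1) * om_cube)
              (by norm_num) = gD 1 1 one_cube one_cube from
          gD_congr _ _ _ _ (by linear_combination om_cube) (by norm_num), gD_one]
      have : φ s * φ s * φ s = 1 := by rw [← map_mul, ← map_mul, hcube, map_one]
      have := congrArg Units.val this
      push_cast at this
      linear_combination this
    have hw2 : w * w = 1 := by
      rw [hw_def, gW_mul_gW]
      rw [show gD ((1:ℂ)*1) (1*1) (by norm_num) (by norm_num) = gD 1 1 one_cube one_cube from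
        gD_congr _ _ _ _ (by norm_num) (by norm_num), gD_one]
    have hwsq : (↑(φ w) : ℂ)^2 = 1 := by
      have : φ w * φ w = 1 := by rw [← map_mul, hw2, map_one]
      have := congrArg Units.val this
      push_cast at this
      linear_combination this
    obtain ⟨m, hm⟩ : ∃ m : ℕ, (↑(φ s) : ℂ) = om ^ m := by
      rcases cube_root_cases _ hs3 with h|h|h
      · exact ⟨0, by rw [h, pow_zero]⟩
      · exact ⟨1, by rw [h, pow_one]⟩
      · exact ⟨2, h⟩
    obtain ⟨n, hn⟩ : ∃ n : ℕ, (↑(φ w) : ℂ) = (-1) ^ n := by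
      rcases sq_one_cases _ hwsq with h|h
      · exact ⟨0, by rw [h, pow_zero]⟩
      · exact ⟨1, by rw [h, pow_one]⟩
    -- value of φ on diagonal elements with second entry 1
    have hpsi1 : ∀ (a : ℂ) (ha : a^3 = 1), (↑(φ (gD a 1 ha one_cube)) : ℂ) = a ^ m := by
      intro a ha
      rcases cube_root_cases a ha with h|h|h
      · subst h
        have he : gD (1:ℂ) 1 ha one_cube = 1 := gD_one
        rw [he, map_one, one_pow, Units.val_one]
      · subst h
        exact hm
      · subst h
        have he : s * s = gD (om^2) 1 ha one_cube := by
          rw [hs_def, gD_mul]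
          exact gD_congr _ _ _ _ (by ring) (by ring)
        rw [← he, map_mul]
        push_cast
        rw [hm]
        ring
    -- value of φ on diagonal elements with first entry 1
    have hpsi2 : ∀ (a : ℂ) (ha : a^3 = 1), (↑(φ (gD 1 a one_cube ha)) : ℂ) = a ^ m := by
      intro a ha
      have he : w * gD a 1 ha one_cube * w = gD 1 a one_cube ha := by
        rw [hw_def, gW_mul_gD, gW_mul_gW]
        exact gD_congr _ _ _ _ (by ring) (by ring)
      have := congrArg (fun x => (↑(φ x) : ℂ)) he
      simp only [map_mul, Units.val_mul] at this
      rw [← this, hpsi1 a ha]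
      have : (↑(φ w):ℂ) * (↑(φ w):ℂ) = 1 := by linear_combination hwsq
      linear_combination (a^m) * this
    -- value of φ on general diagonal elements
    have hdiag : ∀ (a d : ℂ) (ha : a^3 = 1) (hd : d^3 = 1),
        (↑(φ (gD a d ha hd)) : ℂ) = a ^ m * d ^ m := by
      intro a d ha hd
      have he : gD a 1 ha one_cube * gD 1 d one_cube hd = gD a d ha hd := by
        rw [gD_mul]
        exact gD_congr _ _ _ _ (by ring) (by ring)
      rw [← he, map_mul, Units.val_mul, hpsi1 a ha, hpsi2 d hd]
    -- value of φ on antidiagonal elements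
    have hanti : ∀ (b c : ℂ) (hb : b^3 = 1) (hc : c^3 = 1),
        (↑(φ (gW b c hb hc)) : ℂ) = b ^ m * c ^ m * (-1) ^ n := by
      intro b c hb hc
      have he : gD b c hb hc * w = gW b c hb hc := by
        rw [hw_def, gD_mul_gW]
        congr 1 <;> ring
      rw [← he, map_mul, Units.val_mul, hdiag b c hb hc, hn]
    refine ⟨((4*m + 3*n : ℕ) : ℤ), ?_⟩
    intro g
    rw [zpow_natCast]
    apply Units.ext
    rw [Units.val_pow_eq_pow_val, Matrix.GeneralLinearGroup.val_det_apply]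
    rcases gamma_cases ↑g g.2 with ⟨h1,h2,h3,h4⟩|⟨h1,h2,h3,h4⟩
    · set a := ((↑g : GL (Fin 2) ℂ) : Matrix (Fin 2) (Fin 2) ℂ) 0 0
      set d := ((↑g : GL (Fin 2) ℂ) : Matrix (Fin 2) (Fin 2) ℂ) 1 1
      have hge : g = gD a d h3 h4 := by
        apply gamma_eq_of_coe
        rw [gD_coe]
        conv_lhs => rw [Matrix.eta_fin_two (((g : GL (Fin 2) ℂ)) : Matrix (Fin 2) (Fin 2) ℂ)]
        rw [h1, h2]
      rw [hge, hdiag a d h3 h4, gD_coe, Matrix.det_fin_two_of]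
      rw [show a * d - 0 * 0 = a * d by ring, mul_pow,
        pow_exp_cube a h3, pow_exp_cube d h4]
    · set b := ((↑g : GL (Fin 2) ℂ) : Matrix (Fin 2) (Fin 2) ℂ) 0 1
      set c := ((↑g : GL (Fin 2) ℂ) : Matrix (Fin 2) (Fin 2) ℂ) 1 0
      have hge : g = gW b c h3 h4 := by
        apply gamma_eq_of_coe
        rw [gW_coe]
        conv_lhs => rw [Matrix.eta_fin_two (((g : GL (Fin 2) ℂ)) : Matrix (Fin 2) (Fin 2) ℂ)]
        rw [h1, h2]
      rw [hge, hanti b c h3 h4, gW_coe, Matrix.det_fin_two_of]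
      rw [show (0:ℂ) * 0 - b * c = (-1) * (b * c) by ring, mul_pow, mul_pow,
        pow_exp_cube b h3, pow_exp_cube c h4, neg_one_exp]
      ring
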